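/- Let D be a finite-dimensional division algebra over a p-adic local field K with Schur index s, and let τ be an automorphism of D of p-power order whose restriction to K has fixed field k with [K:k] a power of p, with e | [K:k]. Assume the residue field order q_τ of the fixed field satisfies s | q_τ - 1. Then the fixed division subalgebra D^{⟨τ^e⟩} has centre K^{⟨τ^e⟩}, satisfies dim_{D^{⟨τ^e⟩}} D = [K : K^{⟨τ^e⟩}], and has Schur index s. -/

import Mathlib

set_option synthInstance.maxHeartbeats 1000000
set_option maxHeartbeats 1000000

/-- The subring of elements of `D` fixed by a ring automorphism `σ`. -/
def fixedSubring {D : Type*} [Ring D] (σ : D ≃+* D) : Subring D :=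
  RingHom.eqLocus (σ : D →+* D) (RingHom.id D)

/-- The subfield of elements of `K` fixed by a field automorphism `σ`. -/
def fixedSubfield {K : Type*} [Field K] (σ : K ≃+* K) : Subfield K where
  carrier := {x | σ x = x}
  zero_mem' := map_zero σ
  one_mem' := map_one σ
  add_mem' := by intro x y hx hy; simp only [Set.mem_setOf_eq, map_add] at *; rw [hx, hy]
  mul_mem' := by intro x y hx hy; simp only [Set.mem_setOf_eq, map_mul] at *; rw [hx, hy]
  neg_mem' := by intro x hx; simp only [Set.mem_setOf_eq, map_neg] at *; rw [hx]
  inv_mem' := by intro x hx; simp only [Set.mem_setOf_eq, map_inv₀] at *; rw [hx]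

theorem mem_fixedSubring {D : Type*} [Ring D] (σ : D ≃+* D) (x : D) :
    x ∈ fixedSubring σ ↔ σ x = x := Iff.rfl

theorem ringEquiv_pow_succ_apply {D : Type*} [Ring D] (σ : D ≃+* D) (j : ℕ) (x : D) :
    (σ ^ (j + 1)) x = (σ ^ j) (σ x) := by
  rw [pow_succ]; rfl

theorem ringEquiv_pow_succ_apply' {D : Type*} [Ring D] (σ : D ≃+* D) (j : ℕ) (x : D) :
    (σ ^ (j + 1)) x = σ ((σ ^ j) x) := by
  rw [pow_succ']; rfl

theorem compat_pow {K D : Type*} [Field K] [DivisionRing D] [Algebra K D]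
    (σD : D ≃+* D) (σK : K ≃+* K)
    (hcompat : ∀ y : K, σD (algebraMap K D y) = algebraMap K D (σK y)) :
    ∀ (j : ℕ) (y : K), (σD ^ j) (algebraMap K D y) = algebraMap K D ((σK ^ j) y) := by
  intro j
  induction j with
  | zero => intro y; rfl
  | succ j ih =>
    intro y
    rw [ringEquiv_pow_succ_apply, hcompat, ih, ← ringEquiv_pow_succ_apply]

theorem fixed_pow {D : Type*} [Ring D] (σ : D ≃+* D) {x : D} (hx : σ x = x) :
    ∀ j : ℕ, (σ ^ j) x = x := by
  intro j
  induction j with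
  | zero => rfl
  | succ j ih => rw [ringEquiv_pow_succ_apply, hx, ih]

open Module in
theorem charIndep {K D : Type*} [Field K] [DivisionRing D] [Algebra K D]
    {n : ℕ} (f : Fin n → (K ≃+* K)) (hf : Function.Injective f)
    (a : Fin n → D) (h : ∀ y : K, ∑ i, algebraMap K D (f i y) * a i = 0) : ∀ i, a i = 0 := by
  classical
  let b := Basis.ofVectorSpace K D
  have h2 : ∀ (y : K) (j : _), ∑ i, f i y * b.repr (a i) j = 0 := by
    intro y j
    have h1 : ∑ i, (f i y) • a i = 0 := by
      have := h y
      simp only [Algebra.smul_def]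
      exact this
    have h3 := congrArg (fun z => b.repr z j) h1
    simp only [map_sum, map_smul, Finsupp.coe_smul, Finsupp.smul_apply, smul_eq_mul,
      map_zero, Finsupp.coe_zero, Pi.zero_apply] at h3
    convert h3 using 2
    simp [Finset.sum_apply]
  have hmon : Function.Injective (fun i : Fin n => (f i : K →* K)) := by
    intro i j hij
    apply hf
    ext y
    exact DFunLike.congr_fun hij y
  have hli := (linearIndependent_monoidHom K K).comp _ hmon
  intro i
  have hz : ∀ j, b.repr (a i) j = 0 := by
    intro j
    refine Fintype.linearIndependent_iff.mp hli (fun i => b.repr (a i) j) ?_ i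
    funext y
    have := h2 y j
    simp only [Finset.sum_apply, Pi.smul_apply, smul_eq_mul, Pi.zero_apply]
    rw [← this]
    refine Finset.sum_congr rfl fun i _ => mul_comm _ _
  have : b.repr (a i) = 0 := by ext j; simp [hz j]
  simpa using congrArg (b.repr.symm) this

theorem mem_fixedSubfield {K : Type*} [Field K] (σ : K ≃+* K) (x : K) :
    x ∈ fixedSubfield σ ↔ σ x = x := Iff.rfl

open Module in
theorem artin_rank_le {D : Type*} [DivisionRing D] (σD : D ≃+* D) (n : ℕ) (hn : 0 < n)
    (hord : orderOf σD = n) : Module.rank ↥(fixedSubring σD) D ≤ n := by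
  classical
  apply rank_le
  intro t ht
  by_contra hlt
  push_neg at hlt
  -- the linear map recording the n equations
  set T : ((↥t) → D) →ₗ[D] (Fin n → D) :=
    { toFun := fun c => fun i => ∑ x, c x * (σD ^ (i : ℕ)) ↑x
      map_add' := by
        intro c₁ c₂; funext i
        simp [add_mul, Finset.sum_add_distrib]
      map_smul' := by
        intro d c; funext i
        simp [Finset.mul_sum, mul_assoc] } with hT
  have hninj : ¬ Function.Injective T := by
    intro hinj
    have h1 := LinearMap.finrank_le_finrank_of_injective hinj
    rw [Module.finrank_fintype_fun_eq_card, Module.finrank_fin_fun, Fintype.card_coe] at h1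
    omega
  rw [← LinearMap.ker_eq_bot] at hninj
  obtain ⟨c₀, hc₀mem, hc₀⟩ := Submodule.ne_bot_iff _ |>.mp hninj
  have hSol₀ : ∀ i : ℕ, ∑ x, c₀ x * (σD ^ i) ↑x = 0 := by
    intro i
    have h1 : T c₀ ⟨i % n, Nat.mod_lt _ hn⟩ = 0 := by
      rw [LinearMap.mem_ker] at hc₀mem; rw [hc₀mem]; rfl
    have h2 : σD ^ (i % n) = σD ^ i := by rw [← hord]; exact pow_mod_orderOf σD i
    have h2' : (⇑σD)^[i % n] = (⇑σD)^[i] := by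
      have := congrArg DFunLike.coe h2; simpa using this
    simpa [hT, h2'] using h1
  -- strong induction on support
  have key : ∀ (N : ℕ) (c : (↥t) → D), (∀ i : ℕ, ∑ x, c x * (σD ^ i) ↑x = 0) →
      (Finset.univ.filter fun x => c x ≠ 0).card ≤ N → c = 0 := by
    intro N
    induction N with
    | zero =>
      intro c _ hcard
      funext x
      by_contra hx
      have hmem : x ∈ Finset.univ.filter fun x => c x ≠ 0 :=
        Finset.mem_filter.mpr ⟨Finset.mem_univ x, hx⟩
      have := Finset.card_pos.mpr ⟨x, hmem⟩
      omega
    | succ N ih =>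
      intro c hSol hcard
      by_contra hc0
      obtain ⟨k, hk⟩ : ∃ k, c k ≠ 0 := by
        by_contra hall; push_neg at hall; exact hc0 (funext fun x => hall x)
      set c' : (↥t) → D := fun x => (c k)⁻¹ * c x with hc'
      have hSol' : ∀ i : ℕ, ∑ x, c' x * (σD ^ i) ↑x = 0 := by
        intro i
        simp only [hc', mul_assoc]
        rw [← Finset.mul_sum, hSol i, mul_zero]
      have hc'k : c' k = 1 := by simp [hc', inv_mul_cancel₀ hk]
      have hSolσ : ∀ i : ℕ, ∑ x, σD (c' x) * (σD ^ i) ↑x = 0 := by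
        have hstep : ∀ j : ℕ, ∑ x, σD (c' x) * (σD ^ (j + 1)) ↑x = 0 := by
          intro j
          have h1 := congrArg σD (hSol' j)
          rw [map_sum, map_zero] at h1
          rw [← h1]
          refine Finset.sum_congr rfl fun x _ => ?_
          rw [map_mul σD (c' x) ((σD ^ j) ↑x), ← ringEquiv_pow_succ_apply']
        intro i
        rcases i with _ | j
        · have h1 := hstep (n - 1)
          rw [Nat.sub_add_cancel hn] at h1
          have hone : σD ^ n = 1 := by rw [← hord]; exact pow_orderOf_eq_one σD
          rw [hone] at h1
          simpa using h1
        · exact hstep j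
      set d : (↥t) → D := fun x => c' x - σD (c' x) with hd
      have hSold : ∀ i : ℕ, ∑ x, d x * (σD ^ i) ↑x = 0 := by
        intro i
        simp only [hd, sub_mul, Finset.sum_sub_distrib, hSol' i, hSolσ i, sub_zero]
      have hsupp : (Finset.univ.filter fun x => d x ≠ 0) ⊆
          (Finset.univ.filter fun x => c x ≠ 0).erase k := by
        intro x hx
        simp only [Finset.mem_filter, Finset.mem_univ, true_and] at hx
        rw [Finset.mem_erase]
        constructor
        · rintro rfl
          apply hx
          simp [hd, hc'k]
        · simp only [Finset.mem_filter, Finset.mem_univ, true_and]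
          intro hcx
          apply hx
          have : c' x = 0 := by simp [hc', hcx]
          simp [hd, this]
      have hcard' : (Finset.univ.filter fun x => d x ≠ 0).card ≤ N := by
        have h1 := Finset.card_le_card hsupp
        have h2 := Finset.card_erase_le (s := Finset.univ.filter fun x => c x ≠ 0) (a := k)
        have h3 : k ∈ Finset.univ.filter fun x => c x ≠ 0 := by simp [hk]
        have h4 := Finset.card_erase_of_mem h3
        omega
      have hdzero := ih d hSold hcard'
      have hfix : ∀ x, c' x ∈ fixedSubring σD := by
        intro x
        have h1 : c' x - σD (c' x) = 0 := congrFun hdzero x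
        exact (sub_eq_zero.mp h1).symm
      have h0 : ∑ x, c' x * ↑x = 0 := by
        have := hSol' 0
        simpa using this
      have hzero := Fintype.linearIndependent_iff.mp ht (fun x => ⟨c' x, hfix x⟩) h0 k
      rw [Subtype.ext_iff] at hzero
      simp only at hzero
      rw [hc'k] at hzero
      exact one_ne_zero hzero
  exact hc₀ (key (Finset.univ.filter fun x => c₀ x ≠ 0).card c₀ hSol₀ le_rfl)

open Module in
theorem auxMain {K D : Type*} [Field K] [DivisionRing D] [Algebra K D] [FiniteDimensional K D]
    (hcentral : ∀ z : D, z ∈ Subring.center D ↔ ∃ y : K, algebraMap K D y = z)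
    (σD : D ≃+* D) (σK : K ≃+* K)
    (hcompat : ∀ y : K, σD (algebraMap K D y) = algebraMap K D (σK y))
    (n : ℕ) (hn : 0 < n) (hordD : orderOf σD = n) (hordK : orderOf σK = n) :
    (∀ x : ↥(fixedSubring σD),
      x ∈ Subring.center ↥(fixedSubring σD) ↔
        ∃ y : K, σK y = y ∧ algebraMap K D y = (x : D)) ∧
    Module.finrank ↥(fixedSubring σD) D = Module.finrank ↥(fixedSubfield σK) K ∧
    Module.finrank ↥(Subring.center ↥(fixedSubring σD)) ↥(fixedSubring σD) =
      Module.finrank K D := by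
  classical
  have halginj : Function.Injective (algebraMap K D) := RingHom.injective _
  have hcentr : ∀ (y : K) (d : D), algebraMap K D y * d = d * algebraMap K D y := by
    intro y d
    have h1 : algebraMap K D y ∈ Subring.center D := (hcentral _).mpr ⟨y, rfl⟩
    exact (Subring.mem_center_iff.mp h1 d).symm
  have hKinj : Function.Injective (fun i : Fin n => σK ^ (i : ℕ)) := by
    intro i j hij
    exact Fin.ext (pow_injOn_Iio_orderOf (x := σK)
      (by rw [hordK]; exact i.isLt) (by rw [hordK]; exact j.isLt) hij)
  have charD : ∀ (a : Fin n → D),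
      (∀ y : K, ∑ i : Fin n, algebraMap K D ((σK ^ (i : ℕ)) y) * a i = 0) → ∀ i, a i = 0 :=
    fun a h => charIndep _ hKinj a h
  have directD : ∀ (a : Fin n → D),
      (∀ x : D, ∑ i : Fin n, (σD ^ (i : ℕ)) x * a i = 0) → ∀ i, a i = 0 := by
    intro a h
    refine charD a fun y => ?_
    have h1 := h (algebraMap K D y)
    simpa only [compat_pow σD σK hcompat] using h1
  -- the fixed field is the fixed field of the cyclic group generated by σK
  have hford : IsOfFinOrder σK := orderOf_pos_iff.mp (hordK ▸ hn)
  haveI hfinG : Finite (Subgroup.zpowers σK) := hford.finite_zpowers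
  haveI : Fintype (Subgroup.zpowers σK) := Fintype.ofFinite _
  haveI : FaithfulSMul (Subgroup.zpowers σK) K :=
    ⟨fun {g₁ g₂} h => Subtype.ext (RingEquiv.ext fun y => h y)⟩
  have hcardG : Fintype.card (Subgroup.zpowers σK) = n := by
    rw [← Nat.card_eq_fintype_card, Nat.card_zpowers, hordK]
  have hKeq : fixedSubfield σK = FixedPoints.subfield (Subgroup.zpowers σK) K := by
    ext x
    constructor
    · intro hx g
      exact smul_eq_self_of_mem_zpowers g.2 (hx : σK x = x)
    · intro hx
      exact hx ⟨σK, Subgroup.mem_zpowers σK⟩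
  haveI hKfd : FiniteDimensional ↥(fixedSubfield σK) K := by rw [hKeq]; infer_instance
  have hKn : finrank ↥(fixedSubfield σK) K = n := by
    rw [hKeq, FixedPoints.finrank_eq_card, hcardG]
  -- scalar action facts
  have hsmulKD : ∀ (c : ↥(fixedSubfield σK)) (x : D), c • x = algebraMap K D c.val * x := by
    intro c x
    show (c.val : K) • x = algebraMap K D c.val * x
    rw [Algebra.smul_def]
  haveI hKDfd : FiniteDimensional ↥(fixedSubfield σK) D := Module.Finite.trans K D
  have hmemD' : ∀ c : ↥(fixedSubfield σK), algebraMap K D c.val ∈ fixedSubring σD := by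
    intro c
    rw [mem_fixedSubring, hcompat]
    have h1 : σK c.val = c.val := c.2
    rw [h1]
  letI instAlgK'D' : Algebra ↥(fixedSubfield σK) ↥(fixedSubring σD) :=
    RingHom.toAlgebra'
      { toFun := fun c => ⟨algebraMap K D c.val, hmemD' c⟩
        map_one' := by apply Subtype.ext; simp
        map_mul' := by intro c₁ c₂; apply Subtype.ext; push_cast; simp
        map_zero' := by apply Subtype.ext; simp
        map_add' := by intro c₁ c₂; apply Subtype.ext; push_cast; simp }
      (fun c x => by apply Subtype.ext; exact hcentr _ _)
  have hsmulKD'' : ∀ (c : ↥(fixedSubfield σK)) (x : ↥(fixedSubring σD)),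
      ((c • x : ↥(fixedSubring σD)) : D) = algebraMap K D c.val * (x : D) :=
    fun c x => rfl
  haveI : IsScalarTower ↥(fixedSubfield σK) ↥(fixedSubring σD) D := ⟨fun c d' x => by
    show ((c • d' : ↥(fixedSubring σD)) : D) * x = c • (d'.val * x)
    rw [hsmulKD'', hsmulKD, mul_assoc]⟩
  haveI hD'fd : FiniteDimensional ↥(fixedSubfield σK) ↥(fixedSubring σD) :=
    FiniteDimensional.of_injective
      ({ toFun := fun x => (x : D)
         map_add' := fun a b => rfl
         map_smul' := fun c x => by
           show ((c • x : ↥(fixedSubring σD)) : D) = c • (x : D)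
           rw [hsmulKD'', hsmulKD] } : ↥(fixedSubring σD) →ₗ[↥(fixedSubfield σK)] D)
      (fun a b hab => Subtype.ext hab)
  letI instDR : DivisionRing ↥(fixedSubring σD) :=
    divisionRingOfFiniteDimensional ↥(fixedSubfield σK) ↥(fixedSubring σD)
  haveI hDD'fd : Module.Finite ↥(fixedSubring σD) D :=
    Module.Finite.of_restrictScalars_finite ↥(fixedSubfield σK) ↥(fixedSubring σD) D
  set n' : ℕ := finrank ↥(fixedSubring σD) D with hn'def
  have hn'le : n' ≤ n := finrank_le_of_rank_le (artin_rank_le σD n hn hordD)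
  haveI : SMulCommClass ↥(fixedSubring σD) ↥(fixedSubfield σK) D := ⟨fun d' c x => by
    show d'.val * (c • x) = c • (d'.val * x)
    rw [hsmulKD, hsmulKD, ← mul_assoc, ← hcentr, mul_assoc]⟩
  let b' : Basis (Fin n') ↥(fixedSubring σD) D := Module.finBasis _ _
  let E : (Fin n' → D) ≃ₗ[↥(fixedSubfield σK)] (D →ₗ[↥(fixedSubring σD)] D) :=
    b'.constr ↥(fixedSubfield σK)
  have hfinpi : ∀ m : ℕ, finrank ↥(fixedSubfield σK) (Fin m → D)
      = m * finrank ↥(fixedSubfield σK) D := by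
    intro m
    rw [Module.finrank_pi_fintype, Finset.sum_const, Finset.card_univ, Fintype.card_fin,
      smul_eq_mul]
  haveI : Module.Finite ↥(fixedSubfield σK) (D →ₗ[↥(fixedSubring σD)] D) :=
    Module.Finite.equiv E
  have hfinHom : finrank ↥(fixedSubfield σK) (D →ₗ[↥(fixedSubring σD)] D)
      = n' * finrank ↥(fixedSubfield σK) D := by
    rw [← E.finrank_eq, hfinpi]
  have hfixD' : ∀ (d : ↥(fixedSubring σD)) (j : ℕ), (σD ^ j) d.val = d.val :=
    fun d j => fixed_pow σD d.2 j
  let Ψ : (Fin n → D) →ₗ[↥(fixedSubfield σK)] (D →ₗ[↥(fixedSubring σD)] D) :=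
    { toFun := fun a =>
        { toFun := fun x => ∑ i : Fin n, (σD ^ (i : ℕ)) x * a i
          map_add' := by
            intro x y
            rw [← Finset.sum_add_distrib]
            exact Finset.sum_congr rfl fun i _ => by rw [map_add, add_mul]
          map_smul' := by
            intro d x
            show ∑ i : Fin n, (σD ^ (i : ℕ)) (d.val * x) * a i
                = d.val * ∑ i : Fin n, (σD ^ (i : ℕ)) x * a i
            rw [Finset.mul_sum]
            exact Finset.sum_congr rfl fun i _ => by rw [map_mul, hfixD', mul_assoc] }
      map_add' := by
        intro a b
        apply LinearMap.ext
        intro x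
        show ∑ i : Fin n, (σD ^ (i : ℕ)) x * (a i + b i)
            = (∑ i : Fin n, (σD ^ (i : ℕ)) x * a i) + ∑ i : Fin n, (σD ^ (i : ℕ)) x * b i
        rw [← Finset.sum_add_distrib]
        exact Finset.sum_congr rfl fun i _ => mul_add _ _ _
      map_smul' := by
        intro c a
        apply LinearMap.ext
        intro x
        show ∑ i : Fin n, (σD ^ (i : ℕ)) x * ((c • a) i)
            = c • ∑ i : Fin n, (σD ^ (i : ℕ)) x * a i
        have h1 : ∀ i : Fin n, (σD ^ (i : ℕ)) x * ((c • a) i)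
            = algebraMap K D c.val * ((σD ^ (i : ℕ)) x * a i) := by
          intro i
          rw [Pi.smul_apply, hsmulKD, ← mul_assoc, ← hcentr, mul_assoc]
        rw [Finset.sum_congr rfl fun i _ => h1 i, ← Finset.mul_sum, hsmulKD] }
  have hΨinj : Function.Injective Ψ := by
    rw [← LinearMap.ker_eq_bot]
    apply LinearMap.ker_eq_bot'.mpr
    intro a ha
    have h1 : ∀ x : D, ∑ i : Fin n, (σD ^ (i : ℕ)) x * a i = 0 :=
      fun x => LinearMap.congr_fun ha x
    funext i
    exact directD a h1 i
  have hKDpos : 0 < finrank ↥(fixedSubfield σK) D := Module.finrank_pos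
  have hnn' : n ≤ n' := by
    have h1 := LinearMap.finrank_le_finrank_of_injective hΨinj
    rw [hfinpi n, hfinHom] at h1
    exact Nat.le_of_mul_le_mul_right h1 hKDpos
  have hn'eq : n' = n := le_antisymm hn'le hnn'
  have hΨsurj : Function.Surjective Ψ := by
    refine (LinearMap.injective_iff_surjective_of_finrank_eq_finrank ?_).mp hΨinj
    rw [hfinpi n, hfinHom, hn'eq]
  -- the centre of the fixed subring
  have hcent : ∀ x : ↥(fixedSubring σD), x ∈ Subring.center ↥(fixedSubring σD) ↔
      ∃ y : K, σK y = y ∧ algebraMap K D y = (x : D) := by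
    intro x
    constructor
    · intro hx
      have hcomm : ∀ g : ↥(fixedSubring σD), g.val * x.val = x.val * g.val := by
        intro g
        exact congrArg Subtype.val (Subring.mem_center_iff.mp hx g)
      let L : D →ₗ[↥(fixedSubring σD)] D :=
        { toFun := fun z => x.val * z
          map_add' := fun z w => mul_add _ _ _
          map_smul' := by
            intro d z
            show x.val * (d.val * z) = d.val * (x.val * z)
            rw [← mul_assoc, ← hcomm d, mul_assoc] }
      obtain ⟨a, ha⟩ := hΨsurj L
      have h1 : ∀ z : D, ∑ i : Fin n, (σD ^ (i : ℕ)) z * a i = x.val * z :=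
        fun z => LinearMap.congr_fun ha z
      have h3 : ∀ (dd : D) (i : Fin n), (σD ^ (i : ℕ)) dd * a i = a i * dd := by
        intro dd i
        refine sub_eq_zero.mp (directD (fun i => (σD ^ (i : ℕ)) dd * a i - a i * dd) ?_ i)
        intro z
        have e1 : ∑ i : Fin n, (σD ^ (i : ℕ)) z * ((σD ^ (i : ℕ)) dd * a i)
            = x.val * (z * dd) := by
          rw [← h1 (z * dd)]
          exact Finset.sum_congr rfl fun i _ => by rw [map_mul, mul_assoc]
        have e2 : ∑ i : Fin n, (σD ^ (i : ℕ)) z * (a i * dd) = x.val * z * dd := by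
          rw [← h1 z, Finset.sum_mul]
          exact Finset.sum_congr rfl fun i _ => by rw [mul_assoc]
        calc ∑ i : Fin n, (σD ^ (i : ℕ)) z * ((σD ^ (i : ℕ)) dd * a i - a i * dd)
            = ∑ i : Fin n, ((σD ^ (i : ℕ)) z * ((σD ^ (i : ℕ)) dd * a i)
                - (σD ^ (i : ℕ)) z * (a i * dd)) :=
              Finset.sum_congr rfl fun i _ => mul_sub _ _ _
          _ = x.val * (z * dd) - x.val * z * dd := by
              rw [Finset.sum_sub_distrib, e1, e2]
          _ = 0 := by rw [← mul_assoc, sub_self]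
      have h4 : ∀ i : Fin n, (i : ℕ) ≠ 0 → a i = 0 := by
        intro i hi
        have hne : σK ^ (i : ℕ) ≠ 1 := by
          intro hone
          have hdvd := orderOf_dvd_of_pow_eq_one hone
          rw [hordK] at hdvd
          have hle := Nat.le_of_dvd (Nat.pos_of_ne_zero hi) hdvd
          have hlt := i.isLt
          omega
        obtain ⟨y, hy⟩ : ∃ y : K, (σK ^ (i : ℕ)) y ≠ y := by
          by_contra hall
          push_neg at hall
          exact hne (RingEquiv.ext hall)
        have h5 := h3 (algebraMap K D y) i
        rw [compat_pow σD σK hcompat, ← hcentr y (a i)] at h5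
        have h6 : (algebraMap K D ((σK ^ (i : ℕ)) y) - algebraMap K D y) * a i = 0 := by
          rw [sub_mul, h5, sub_self]
        rcases mul_eq_zero.mp h6 with h7 | h7
        · exact absurd (halginj (sub_eq_zero.mp h7)) hy
        · exact h7
      have h8 : ∀ z : D, x.val * z = z * a ⟨0, hn⟩ := by
        intro z
        rw [← h1 z, Finset.sum_eq_single (⟨0, hn⟩ : Fin n)]
        · rfl
        · intro i _ hi
          have hi0 : (i : ℕ) ≠ 0 := fun h0 => hi (Fin.ext h0)
          rw [h4 i hi0, mul_zero]
        · intro h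
          exact absurd (Finset.mem_univ _) h
      have ha0 : a ⟨0, hn⟩ = x.val := by
        have h9 := h8 1
        rw [mul_one, one_mul] at h9
        exact h9.symm
      have hxc : x.val ∈ Subring.center D := by
        rw [Subring.mem_center_iff]
        intro g
        exact ((h8 g).trans (by rw [ha0])).symm
      obtain ⟨y, hy⟩ := (hcentral _).mp hxc
      refine ⟨y, ?_, hy⟩
      apply halginj
      rw [← hcompat, hy]
      exact x.2
    · rintro ⟨y, hyfix, hyval⟩
      rw [Subring.mem_center_iff]
      intro g
      apply Subtype.ext
      show g.val * x.val = x.val * g.val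
      rw [← hyval]
      exact (hcentr y g.val).symm
  refine ⟨hcent, ?_, ?_⟩
  · rw [hn'eq]
    exact hKn.symm
  · have htower1 : finrank ↥(fixedSubfield σK) ↥(fixedSubring σD) * finrank ↥(fixedSubring σD) D
        = finrank ↥(fixedSubfield σK) D :=
      Module.finrank_mul_finrank ↥(fixedSubfield σK) ↥(fixedSubring σD) D
    have htower2 : finrank ↥(fixedSubfield σK) K * finrank K D
        = finrank ↥(fixedSubfield σK) D :=
      Module.finrank_mul_finrank ↥(fixedSubfield σK) K D
    have hq : finrank ↥(fixedSubfield σK) ↥(fixedSubring σD) = finrank K D := by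
      rw [← hn'def, hn'eq] at htower1
      rw [hKn] at htower2
      have hmul : finrank ↥(fixedSubfield σK) ↥(fixedSubring σD) * n = finrank K D * n := by
        rw [htower1, ← htower2, mul_comm]
      exact Nat.eq_of_mul_eq_mul_right hn hmul
    let pick : ↥(Subring.center ↥(fixedSubring σD)) → K :=
      fun z => Classical.choose ((hcent z.val).mp z.2)
    have hpick : ∀ z, σK (pick z) = pick z
        ∧ algebraMap K D (pick z) = ((z : ↥(fixedSubring σD)) : D) :=
      fun z => Classical.choose_spec ((hcent z.val).mp z.2)
    let i : ZeroHom ↥(Subring.center ↥(fixedSubring σD)) ↥(fixedSubfield σK) :=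
      { toFun := fun z => ⟨pick z, (hpick z).1⟩
        map_zero' := by
          apply Subtype.ext
          show pick 0 = 0
          apply halginj
          rw [(hpick 0).2]
          simp }
    have hibij : Function.Bijective i := by
      constructor
      · intro z₁ z₂ h12
        have hp : pick z₁ = pick z₂ := congrArg Subtype.val h12
        apply Subtype.ext
        apply Subtype.ext
        rw [← (hpick z₁).2, ← (hpick z₂).2, hp]
      · intro c
        have hzmem : (⟨algebraMap K D c.val, hmemD' c⟩ : ↥(fixedSubring σD))
            ∈ Subring.center ↥(fixedSubring σD) :=
          (hcent _).mpr ⟨c.val, c.2, rfl⟩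
        refine ⟨⟨⟨algebraMap K D c.val, hmemD' c⟩, hzmem⟩, ?_⟩
        apply Subtype.ext
        show pick _ = c.val
        apply halginj
        exact (hpick _).2
    have hsc : ∀ (r : ↥(Subring.center ↥(fixedSubring σD))) (m : ↥(fixedSubring σD)),
        (AddEquiv.refl ↥(fixedSubring σD)) (r • m) = i r • (AddEquiv.refl _) m := by
      intro r m
      apply Subtype.ext
      show ((r : ↥(fixedSubring σD)) : D) * (m : D) = algebraMap K D (pick r) * (m : D)
      rw [(hpick r).2]
    have hrk : Module.rank ↥(Subring.center ↥(fixedSubring σD)) ↥(fixedSubring σD)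
        = Module.rank ↥(fixedSubfield σK) ↥(fixedSubring σD) :=
      rank_eq_of_equiv_equiv i (AddEquiv.refl ↥(fixedSubring σD)) hibij hsc
    show finrank ↥(Subring.center ↥(fixedSubring σD)) ↥(fixedSubring σD) = finrank K D
    rw [← hq]
    simp only [finrank]
    rw [hrk]

/-- Let `D` be a finite-dimensional division algebra with centre a
`p`-adic local field `K` and Schur index `s` (`dim_K D = s²`), and let `τ` be an
automorphism of `D` of `p`-power order `d` restricting on `K` to a Galois automorphism
`τK` of the same `p`-power order `d` (so the fixed field `k` of `τK` satisfies
`[K:k] = d`, a power of `p`), and let `e ∣ d`.  Assume the fixed field contains a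
primitive `(qτ - 1)`-st root of unity with `s ∣ qτ - 1` (the residue condition).
Then the fixed division subalgebra `D^⟨τ^e⟩` has centre `K^⟨τ^e⟩`, satisfies
`dim_{D^⟨τ^e⟩} D = [K : K^⟨τ^e⟩]`, and has Schur index `s`. -/
theorem statement19 {p : ℕ} [Fact p.Prime] (hodd : Odd p)
    {K D : Type*} [Field K] [Algebra ℚ_[p] K] [FiniteDimensional ℚ_[p] K]
    [DivisionRing D] [Algebra K D] [FiniteDimensional K D]
    (hcentral : ∀ z : D, z ∈ Subring.center D ↔ ∃ y : K, algebraMap K D y = z)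
    (s : ℕ) (hs : Module.finrank K D = s ^ 2)
    (τD : D ≃+* D) (τK : K ≃+* K)
    (hcompat : ∀ y : K, τD (algebraMap K D y) = algebraMap K D (τK y))
    (m : ℕ) (hτD : orderOf τD = p ^ m) (hτK : orderOf τK = p ^ m)
    (e : ℕ) (he : e ∣ p ^ m)
    (qτ : ℕ) (hqτ : 1 < qτ) (hsq : s ∣ qτ - 1)
    (ω : K) (hω : IsPrimitiveRoot ω (qτ - 1)) (hωfix : τK ω = ω) :
    (∀ x : ↥(fixedSubring (τD ^ e)),
      x ∈ Subring.center ↥(fixedSubring (τD ^ e)) ↔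
        ∃ y : K, (τK ^ e) y = y ∧ algebraMap K D y = (x : D)) ∧
    Module.finrank ↥(fixedSubring (τD ^ e)) D =
      Module.finrank ↥(fixedSubfield (τK ^ e)) K ∧
    Module.finrank ↥(Subring.center ↥(fixedSubring (τD ^ e)))
      ↥(fixedSubring (τD ^ e)) = s ^ 2 := by
  have hppos : 0 < p ^ m := pow_pos (Nat.Prime.pos Fact.out) m
  have he0 : e ≠ 0 := by
    rintro rfl
    rw [zero_dvd_iff] at he
    omega
  have hordK' : orderOf (τK ^ e) = p ^ m / Nat.gcd (p ^ m) e := by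
    rw [orderOf_pow' τK he0, hτK]
  have hordD' : orderOf (τD ^ e) = p ^ m / Nat.gcd (p ^ m) e := by
    rw [orderOf_pow' τD he0, hτD]
  have hnpos : 0 < orderOf (τK ^ e) := by
    rw [hordK']
    exact Nat.div_pos (Nat.le_of_dvd hppos (Nat.gcd_dvd_left _ _))
      (Nat.gcd_pos_of_pos_left _ hppos)
  have hordDn : orderOf (τD ^ e) = orderOf (τK ^ e) := by rw [hordD', hordK']
  have hcompat' : ∀ y : K, (τD ^ e) (algebraMap K D y) = algebraMap K D ((τK ^ e) y) :=
    compat_pow τD τK hcompat e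
  obtain ⟨h1, h2, h3⟩ := auxMain hcentral (τD ^ e) (τK ^ e) hcompat'
    (orderOf (τK ^ e)) hnpos hordDn rfl
  exact ⟨h1, h2, by rw [h3, hs]⟩
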